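/- Let 𝒜 be a Hilbert evolution algebra with a natural orthonormal basis 𝓑 = {e_i}_{i∈ℕ}. If G(𝒜,𝓑) contains an oriented cycle, then 𝒜 is neither nil nor nilpotent: taking an oriented cycle {i₁, …, i_m, i₁} of minimal length, the element v = e_{i₁} + ⋯ + e_{i_m} satisfies v^n ≠ 0 for every n ∈ ℕ. -/

import Mathlib

noncomputable section

open scoped ENat

/-! ### Digraph notions associated to a matrix of structural constants

The associated digraph `G(𝒜,𝓑)` has vertex set `ℕ` and a directed edge `(i,k)` iff
`ω i k ≠ 0`. -/

/-- `DsetU ω m U` is the set `D^m(U)` of `m`-th generation descendants of `U`: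
`D^0(U) = U` and `D^{m+1}(U) = {k | ∃ i ∈ D^m(U), ω i k ≠ 0}`. -/
def DsetU (ω : ℕ → ℕ → ℂ) : ℕ → Set ℕ → Set ℕ
  | 0, U => U
  | m + 1, U => {k | ∃ i ∈ DsetU ω m U, ω i k ≠ 0}

/-- `Dm ω m i = D^m(i)`, the `m`-th generation descendants of the vertex `i`. -/
def Dm (ω : ℕ → ℕ → ℂ) (m i : ℕ) : Set ℕ := DsetU ω m {i}

/-- `Desc ω i = D(i) = ⋃_{m ≥ 1} D^m(i)`, the set of descendants of `i`. -/
def Desc (ω : ℕ → ℕ → ℂ) (i : ℕ) : Set ℕ := ⋃ m ∈ {m : ℕ | 1 ≤ m}, Dm ω m i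

/-- `gdist ω i u` is the length of a shortest directed path (walk) from `i` to `u`. -/
def gdist (ω : ℕ → ℕ → ℂ) (i u : ℕ) : ℕ := sInf {n : ℕ | u ∈ Dm ω n i}

/-- The depth `δ(G_i) = sup {dist(i,u) : u ∈ D(i)}` of the subgraph `G_i` induced on the
descendants of `i`, as an extended natural number (`⊤` when unbounded). -/
def depth (ω : ℕ → ℕ → ℂ) (i : ℕ) : ℕ∞ := ⨆ u ∈ Desc ω i, (gdist ω i u : ℕ∞)

/-- `p 0, p 1, …, p n` is an oriented cycle: a non-empty directed path in which the only
repeated vertices are the first and the last one. -/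
def IsOrientedCycle (ω : ℕ → ℕ → ℂ) (n : ℕ) (p : ℕ → ℕ) : Prop :=
  0 < n ∧ (∀ m < n, ω (p m) (p (m + 1)) ≠ 0) ∧ p n = p 0 ∧
    ∀ a b, a < b → b < n → p a ≠ p b

/-- The digraph associated to `ω` contains an oriented cycle. -/
def HasOrientedCycle (ω : ℕ → ℕ → ℂ) : Prop := ∃ n p, IsOrientedCycle ω n p

/-! ### Algebra notions -/

variable {H : Type*} [NormedAddCommGroup H] [InnerProductSpace ℂ H] [CompleteSpace H]

/-- The structural constants of a Hilbert evolution algebra with product `mul` relative to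
the natural orthonormal basis `e`: `ω i k` is the `k`-th coordinate of `e i · e i`,
so that `e i · e i = ∑'_k ω i k • e k`. -/
def structConst (mul : H →ₗ[ℂ] H →ₗ[ℂ] H) (e : HilbertBasis ℕ ℂ H) (i k : ℕ) : ℂ :=
  e.repr (mul (e i) (e i)) k

/-- Principal powers: `ppow mul v n = v^n` for `n ≥ 1` (with the junk value `v` at `n = 0`):
`v^1 = v` and `v^{n+1} = v^n · v`. -/
def ppow (mul : H →ₗ[ℂ] H →ₗ[ℂ] H) (v : H) : ℕ → H
  | 0 => v
  | 1 => v
  | n + 2 => mul (ppow mul v (n + 1)) v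

/-- The algebra is nil: every element has a vanishing principal power. -/
def IsNil (mul : H →ₗ[ℂ] H →ₗ[ℂ] H) : Prop := ∀ v : H, ∃ n : ℕ, 1 ≤ n ∧ ppow mul v n = 0

/-- The product `S·T` of two subspaces: the span of all products `x·y`, `x ∈ S`, `y ∈ T`. -/
def mulSub (mul : H →ₗ[ℂ] H →ₗ[ℂ] H) (S T : Submodule ℂ H) : Submodule ℂ H :=
  Submodule.span ℂ {z : H | ∃ x ∈ S, ∃ y ∈ T, z = mul x y}

/-- The powers `𝒜^n` (for `n ≥ 1`, with the junk value `⊤` at `n = 0`):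
`𝒜^1 = 𝒜` and `𝒜^{n+1} = ∑_{i=1}^{n} 𝒜^i 𝒜^{n+1-i}`. -/
def apow (mul : H →ₗ[ℂ] H →ₗ[ℂ] H) (n : ℕ) : Submodule ℂ H :=
  n.strongRecOn fun n ih =>
    match n, ih with
    | 0, _ => ⊤
    | 1, _ => ⊤
    | m + 2, ih =>
      ⨆ (i : ℕ) (h1 : 1 ≤ i) (h2 : i ≤ m + 1),
        mulSub mul (ih i (by omega)) (ih (m + 2 - i) (by omega))

/-- The algebra is nilpotent: `𝒜^n = 0` for some `n`. -/
def IsNilpotent' (mul : H →ₗ[ℂ] H →ₗ[ℂ] H) : Prop := ∃ n : ℕ, 1 ≤ n ∧ apow mul n = ⊥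

/-- The right powers `𝒜^{<n>}` (for `n ≥ 1`, with the junk value `⊤` at `n = 0`):
`𝒜^{<1>} = 𝒜` and `𝒜^{<n+1>} = 𝒜^{<n>}𝒜`. -/
def rapow (mul : H →ₗ[ℂ] H →ₗ[ℂ] H) : ℕ → Submodule ℂ H
  | 0 => ⊤
  | 1 => ⊤
  | n + 2 => mulSub mul (rapow mul (n + 1)) ⊤

/-- The algebra is right nilpotent: `𝒜^{<n>} = 0` for some `n`. -/
def IsRightNilpotent (mul : H →ₗ[ℂ] H →ₗ[ℂ] H) : Prop := ∃ n : ℕ, 1 ≤ n ∧ rapow mul n = ⊥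

/-- The index of right nilpotency `n_r(𝒜) = min {n : 𝒜^{<n>} = 0}`. -/
def rNilIndex (mul : H →ₗ[ℂ] H →ₗ[ℂ] H) : ℕ := sInf {n : ℕ | 1 ≤ n ∧ rapow mul n = ⊥}

/-- Powers of a subset `I ⊆ 𝒜` (for `n ≥ 1`, with the junk value `I` at `n = 0`):
`I^{<1>} = I` and `I^{<n+1>}` is the set of finite sums `∑_j x_j · y_j` with
`x_j ∈ I^{<n>}` and `y_j ∈ I`. -/
def setPow (mul : H →ₗ[ℂ] H →ₗ[ℂ] H) (I : Set H) : ℕ → Set H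
  | 0 => I
  | 1 => I
  | n + 2 => {v : H | ∃ (m : ℕ) (x y : Fin m → H),
      (∀ j, x j ∈ setPow mul I (n + 1)) ∧ (∀ j, y j ∈ I) ∧
        v = ∑ j, mul (x j) (y j)}

end

noncomputable section

variable {H : Type*} [NormedAddCommGroup H] [InnerProductSpace ℂ H] [CompleteSpace H]



open scoped InnerProductSpace

private lemma mod_succ_inj {n a b : ℕ} (ha : a < n) (hb : b < n)
    (h : (a + 1) % n = (b + 1) % n) : a = b := by
  have h2 : a ≡ b [MOD n] := Nat.ModEq.add_right_cancel' 1 h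
  rwa [Nat.ModEq, Nat.mod_eq_of_lt ha, Nat.mod_eq_of_lt hb] at h2

private lemma pred_spec {n i : ℕ} (hn : 0 < n) (hi : i < n) :
    (i + n - 1) % n < n ∧ ((i + n - 1) % n + 1) % n = i := by
  refine ⟨Nat.mod_lt _ hn, ?_⟩
  rw [Nat.mod_add_mod]
  have h1 : i + n - 1 + 1 = i + n := by omega
  rw [h1, Nat.add_mod_right, Nat.mod_eq_of_lt hi]

private lemma cyc_edge {ω : ℕ → ℕ → ℂ} {n : ℕ} {p : ℕ → ℕ} (hcyc : IsOrientedCycle ω n p)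
    {r : ℕ} (hr : r < n) : ω (p r) (p ((r + 1) % n)) ≠ 0 := by
  have h := hcyc.2.1 r hr
  rcases Nat.lt_or_ge (r + 1) n with h1 | h1
  · rwa [Nat.mod_eq_of_lt h1]
  · have h2 : r + 1 = n := by omega
    rw [h2, Nat.mod_self, ← hcyc.2.2.1, ← h2]
    exact h

private lemma cyc_inj {ω : ℕ → ℕ → ℂ} {n : ℕ} {p : ℕ → ℕ} (hcyc : IsOrientedCycle ω n p)
    {a b : ℕ} (ha : a < n) (hb : b < n) (h : p a = p b) : a = b := by
  rcases lt_trichotomy a b with hl | he | hl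
  · exact absurd h (hcyc.2.2.2 a b hl hb)
  · exact he
  · exact absurd h.symm (hcyc.2.2.2 b a hl ha)

private lemma chord {ω : ℕ → ℕ → ℂ} {n : ℕ} {p : ℕ → ℕ} (hcyc : IsOrientedCycle ω n p)
    (hmin : ∀ n' p', IsOrientedCycle ω n' p' → n ≤ n')
    {a b : ℕ} (ha : a < n) (hb : b < n) (hne : b ≠ (a + 1) % n) : ω (p a) (p b) = 0 := by
  by_contra hedge
  set d : ℕ := if b ≤ a then a - b else n + a - b with hd
  have hdn : d < n := by rw [hd]; split <;> omega
  have hbd : (b + d) % n = a := by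
    rw [hd]; split
    · next h =>
        have h2 : b + (a - b) = a := by omega
        rw [h2, Nat.mod_eq_of_lt ha]
    · next h =>
        have h2 : b + (n + a - b) = n + a := by omega
        rw [h2, Nat.add_mod_left, Nat.mod_eq_of_lt ha]
  set L := d + 1 with hL
  set q : ℕ → ℕ := fun m => if m = L then p b else p ((b + m) % n) with hq
  have hqcyc : IsOrientedCycle ω L q := by
    refine ⟨Nat.succ_pos d, ?_, ?_, ?_⟩
    · intro m hm
      have hmL : m ≠ L := by omega
      have hqm : q m = p ((b + m) % n) := by simp [hq, hmL]
      by_cases hm1 : m + 1 = L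
      · have hmd : m = d := by omega
        have hq1 : q (m + 1) = p b := by simp [hq, hm1]
        rw [hqm, hq1, hmd, hbd]
        exact hedge
      · have hq1 : q (m + 1) = p ((b + (m + 1)) % n) := by simp [hq, hm1]
        rw [hqm, hq1]
        have h2 : (b + (m + 1)) % n = ((b + m) % n + 1) % n := by
          rw [Nat.mod_add_mod, ← Nat.add_assoc]
        rw [h2]
        exact cyc_edge hcyc (Nat.mod_lt _ (by omega))
    · have h0 : ¬ ((0 : ℕ) = L) := by omega
      simp only [hq, if_pos rfl, if_neg h0, Nat.add_zero, Nat.mod_eq_of_lt hb]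
    · intro a' b' hab hbL
      have haL : a' ≠ L := by omega
      have hbL' : b' ≠ L := by omega
      simp only [hq, if_neg haL, if_neg hbL']
      intro hpe
      have hr1 : (b + a') % n < n := Nat.mod_lt _ (by omega)
      have hr2 : (b + b') % n < n := Nat.mod_lt _ (by omega)
      have heq := cyc_inj hcyc hr1 hr2 hpe
      have h3 : a' ≡ b' [MOD n] := Nat.ModEq.add_left_cancel' b heq
      rw [Nat.ModEq, Nat.mod_eq_of_lt (by omega), Nat.mod_eq_of_lt (by omega)] at h3
      omega
  have hnL := hmin L q hqcyc
  apply hne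
  rw [hL, hd] at hnL
  by_cases hba : b ≤ a
  · rw [if_pos hba] at hnL
    have hb0 : b = 0 := by omega
    have han : a + 1 = n := by omega
    rw [hb0, han, Nat.mod_self]
  · rw [if_neg hba] at hnL
    have hba2 : b = a + 1 := by omega
    rw [← hba2]
    exact (Nat.mod_eq_of_lt hb).symm

private lemma coord_mul
    (mul : H →ₗ[ℂ] H →ₗ[ℂ] H)
    (hcomm : ∀ x y : H, mul x y = mul y x)
    (hcont : ∀ x : H, Continuous fun y => mul x y)
    (e : HilbertBasis ℕ ℂ H)
    (hnat : ∀ i j : ℕ, i ≠ j → mul (e i) (e j) = 0)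
    (ω : ℕ → ℕ → ℂ)
    (hω : ∀ i k : ℕ, ω i k = structConst mul e i k)
    {n : ℕ} {p : ℕ → ℕ}
    (hinj : ∀ a b, a < n → b < n → p a = p b → a = b)
    (hchord : ∀ a b, a < n → b < n → b ≠ (a + 1) % n → ω (p a) (p b) = 0)
    (w : H) {i j0 : ℕ} (hi : i < n) (hj0 : j0 < n) (hij : (j0 + 1) % n = i) :
    ⟪e (p i), mul w (∑ j ∈ Finset.range n, e (p j))⟫_ℂ
      = e.repr w (p j0) * ω (p j0) (p i) := by
  classical
  set v : H := ∑ j ∈ Finset.range n, e (p j) with hv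
  have key : ∀ k : ℕ, ⟪e (p i), mul (e k) v⟫_ℂ = if k = p j0 then ω (p j0) (p i) else 0 := by
    intro k
    rw [hv, map_sum, inner_sum]
    by_cases hk : k = p j0
    · rw [if_pos hk]
      rw [Finset.sum_eq_single_of_mem j0 (Finset.mem_range.2 hj0)]
      · rw [hk, hω]
        exact (e.repr_apply_apply _ _).symm
      · intro j hj hjne
        have hjn := Finset.mem_range.1 hj
        by_cases hkj : k = p j
        · exact absurd (hinj j0 j hj0 hjn (hk.symm.trans hkj)).symm hjne
        · rw [hnat k (p j) hkj, inner_zero_right]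
    · rw [if_neg hk]
      apply Finset.sum_eq_zero
      intro j hj
      have hjn := Finset.mem_range.1 hj
      by_cases hkj : k = p j
      · have hjj0 : j ≠ j0 := fun h => hk (by rw [hkj, h])
        have hii : i ≠ (j + 1) % n := by
          intro hcon
          exact hjj0 (mod_succ_inj hjn hj0 (by rw [← hcon]; exact hij.symm))
        have hz : ω (p j) (p i) = 0 := hchord j i hjn hi hii
        rw [hω] at hz
        rw [hkj, ← e.repr_apply_apply]
        exact hz
      · rw [hnat k (p j) hkj, inner_zero_right]
  set T : H →L[ℂ] H := ⟨mul v, hcont v⟩ with hT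
  have h1 : HasSum (fun k => e.repr w k • e k) w := e.hasSum_repr w
  have h2 := T.hasSum h1
  have h3 := (innerSL ℂ (e (p i))).hasSum h2
  have heq : (fun k => (innerSL ℂ (e (p i))) (T (e.repr w k • e k)))
      = fun k => if k = p j0 then e.repr w (p j0) * ω (p j0) (p i) else 0 := by
    funext k
    have hTk : T (e.repr w k • e k) = e.repr w k • (mul (e k) v) := by
      rw [map_smul]
      congr 1
      exact hcomm v (e k)
    rw [innerSL_apply_apply, hTk, inner_smul_right, key k]
    by_cases hk : k = p j0
    · rw [if_pos hk, if_pos hk, hk]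
    · rw [if_neg hk, if_neg hk, mul_zero]
  rw [heq] at h3
  have h4 := hasSum_ite_eq (p j0) (e.repr w (p j0) * ω (p j0) (p i))
  have h5 := h4.unique h3
  have h6 : ⟪e (p i), mul w v⟫_ℂ = (innerSL ℂ (e (p i))) (T w) := by
    rw [innerSL_apply_apply, hcomm w v]
    rfl
  rw [h6, ← h5]

private lemma coord_ne
    (mul : H →ₗ[ℂ] H →ₗ[ℂ] H)
    (hcomm : ∀ x y : H, mul x y = mul y x)
    (hcont : ∀ x : H, Continuous fun y => mul x y)
    (e : HilbertBasis ℕ ℂ H)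
    (hnat : ∀ i j : ℕ, i ≠ j → mul (e i) (e j) = 0)
    (ω : ℕ → ℕ → ℂ)
    (hω : ∀ i k : ℕ, ω i k = structConst mul e i k)
    {n : ℕ} {p : ℕ → ℕ} (hcyc : IsOrientedCycle ω n p)
    (hmin : ∀ n' p', IsOrientedCycle ω n' p' → n ≤ n') :
    ∀ m, 1 ≤ m → ∀ i, i < n →
      ⟪e (p i), ppow mul (∑ j ∈ Finset.range n, e (p j)) m⟫_ℂ ≠ 0 := by
  classical
  have hn : 0 < n := hcyc.1
  have hinj : ∀ a b, a < n → b < n → p a = p b → a = b :=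
    fun a b ha hb h => cyc_inj hcyc ha hb h
  have hchord : ∀ a b, a < n → b < n → b ≠ (a + 1) % n → ω (p a) (p b) = 0 :=
    fun a b ha hb hne => chord hcyc hmin ha hb hne
  have ho : Orthonormal ℂ (fun i => (e i : H)) := e.orthonormal
  set v : H := ∑ j ∈ Finset.range n, e (p j) with hv
  intro m hm
  induction m, hm using Nat.le_induction with
  | base =>
    intro i hi
    have h1 : ppow mul v 1 = v := rfl
    rw [h1, hv, inner_sum]
    rw [Finset.sum_eq_single_of_mem i (Finset.mem_range.2 hi)]
    · rw [orthonormal_iff_ite.1 ho, if_pos rfl]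
      exact one_ne_zero
    · intro j hj hjne
      rw [orthonormal_iff_ite.1 ho, if_neg]
      intro hpe
      exact hjne (hinj i j hi (Finset.mem_range.1 hj) hpe).symm
  | succ m hm1 ih =>
    intro i hi
    obtain ⟨hj0lt, hj0succ⟩ := pred_spec hn hi
    have hstep : ppow mul v (m + 1) = mul (ppow mul v m) v := by
      obtain ⟨m', rfl⟩ : ∃ m', m = m' + 1 := ⟨m - 1, by omega⟩
      rfl
    rw [hstep, hv,
      coord_mul mul hcomm hcont e hnat ω hω hinj hchord _ hi hj0lt hj0succ]
    apply mul_ne_zero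
    · rw [e.repr_apply_apply]
      exact ih ((i + n - 1) % n) hj0lt
    · have hedge := cyc_edge hcyc hj0lt
      rwa [hj0succ] at hedge

/-- Let `𝒜` be a complex separable Hilbert evolution algebra with natural
orthonormal basis `𝓑 = {e i}`. If `G(𝒜,𝓑)` contains an oriented cycle, then `𝒜` is
neither nil nor nilpotent; moreover, for any oriented cycle `p 0, …, p n (= p 0)` of
minimal length, the element `v = e (p 0) + ⋯ + e (p (n-1))` satisfies `v^m ≠ 0` for every
`m ≥ 1`. -/
theorem stmt_16
    (mul : H →ₗ[ℂ] H →ₗ[ℂ] H)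
    (hcomm : ∀ x y : H, mul x y = mul y x)
    (hcont : ∀ x : H, Continuous fun y => mul x y)
    (e : HilbertBasis ℕ ℂ H)
    (hnat : ∀ i j : ℕ, i ≠ j → mul (e i) (e j) = 0)
    (ω : ℕ → ℕ → ℂ)
    (hω : ∀ i k : ℕ, ω i k = structConst mul e i k)
    (hc : HasOrientedCycle ω) :
    ¬ IsNil mul ∧ ¬ IsNilpotent' mul ∧
      ∀ (n : ℕ) (p : ℕ → ℕ), IsOrientedCycle ω n p →
        (∀ (n' : ℕ) (p' : ℕ → ℕ), IsOrientedCycle ω n' p' → n ≤ n') →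
        ∀ m : ℕ, 1 ≤ m → ppow mul (∑ j ∈ Finset.range n, e (p j)) m ≠ 0 := by
  classical
  have main : ∀ (n : ℕ) (p : ℕ → ℕ), IsOrientedCycle ω n p →
      (∀ (n' : ℕ) (p' : ℕ → ℕ), IsOrientedCycle ω n' p' → n ≤ n') →
      ∀ m : ℕ, 1 ≤ m → ppow mul (∑ j ∈ Finset.range n, e (p j)) m ≠ 0 := by
    intro n p hcyc hmin m hm h0
    have h := coord_ne mul hcomm hcont e hnat ω hω hcyc hmin m hm 0 hcyc.1
    rw [h0, inner_zero_right] at h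
    exact h rfl
  obtain ⟨N, P, hNP⟩ := hc
  have hex : ∃ n, ∃ p, IsOrientedCycle ω n p := ⟨N, P, hNP⟩
  obtain ⟨P0, hP0⟩ := Nat.find_spec hex
  have hmin : ∀ n' p', IsOrientedCycle ω n' p' → Nat.find hex ≤ n' :=
    fun n' p' h => Nat.find_min' hex ⟨p', h⟩
  set N0 := Nat.find hex with hN0
  set v : H := ∑ j ∈ Finset.range N0, e (P0 j) with hv
  refine ⟨?_, ?_, main⟩
  · intro hnil
    obtain ⟨k, hk1, hk0⟩ := hnil v
    exact main N0 P0 hP0 hmin k hk1 hk0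
  · rintro ⟨k, hk1, hbot⟩
    have hA1 : apow mul 1 = ⊤ := by rw [apow, Nat.strongRecOn_eq]
    have hmem : ∀ m, ppow mul v (m + 1) ∈ apow mul (m + 1) := by
      intro m
      induction m with
      | zero => simp only [zero_add, hA1]; exact Submodule.mem_top
      | succ m' hm' =>
          have hstep : ppow mul v (m' + 2) = mul (ppow mul v (m' + 1)) v := rfl
          rw [hstep]
          have hle : mulSub mul (apow mul (m' + 1)) (apow mul 1) ≤ apow mul (m' + 2) := by
            have hdef : apow mul (m' + 2) = ⨆ (i : ℕ) (_ : 1 ≤ i) (_ : i ≤ m' + 1),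
                mulSub mul (apow mul i) (apow mul (m' + 2 - i)) := by rw [apow, Nat.strongRecOn_eq]; rfl
            rw [hdef]
            have h2 : m' + 2 - (m' + 1) = 1 := by omega
            calc mulSub mul (apow mul (m' + 1)) (apow mul 1)
                = mulSub mul (apow mul (m' + 1)) (apow mul (m' + 2 - (m' + 1))) := by rw [h2]
              _ ≤ _ := by
                  apply le_iSup_of_le (m' + 1)
                  apply le_iSup_of_le (Nat.succ_le_succ (Nat.zero_le m'))
                  exact le_iSup_of_le (le_refl _) (le_refl _)
          apply hle
          apply Submodule.subset_span
          exact ⟨ppow mul v (m' + 1), hm', v, hA1 ▸ Submodule.mem_top, rfl⟩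
    have hk := hmem (k - 1)
    rw [show k - 1 + 1 = k by omega, hbot] at hk
    exact main N0 P0 hP0 hmin k hk1 ((Submodule.mem_bot ℂ).1 hk)


end
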